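/- Fix a queue i ∈ [n] and fixed strategies p_{−i} ∈ (Δ^{m−1})^{n−1} of the other queues. Then the set of global minimizers of the function x ↦ r_i(x, p_{−i}) over x ∈ Δ^{m−1} is a nonempty, closed, convex subset of Δ^{m−1}. -/

import Mathlib

open Finset

/-- Membership of a vector in the probability simplex `Δ^{m-1}`. -/
def inSimplex {m : ℕ} (q : Fin m → ℝ) : Prop :=
  (∀ j, 0 ≤ q j) ∧ ∑ j, q j = 1

/-- `α(S | p, μ, S')`: expected number of packets cleared by the queues in `S` in one round,
when the queues in `S'` have priority over `S` and `S` has priority over all other queues. -/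
noncomputable def alphaQ {n m : ℕ} (p : Fin n → Fin m → ℝ) (μ : Fin m → ℝ)
    (S S' : Finset (Fin n)) : ℝ :=
  ∑ j : Fin m, μ j * (∏ i ∈ S', (1 - p i j)) * (1 - ∏ i ∈ S, (1 - p i j))

/-- `λ(S)`: total arrival rate of the queues in `S`. -/
def lamQ {n : ℕ} (lam : Fin n → ℝ) (S : Finset (Fin n)) : ℝ :=
  ∑ i ∈ S, lam i

/-- `f(S | p, μ, λ, S') = α(S | p, μ, S') / λ(S)`. -/
noncomputable def fQ {n m : ℕ} (p : Fin n → Fin m → ℝ) (μ : Fin m → ℝ) (lam : Fin n → ℝ)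
    (S S' : Finset (Fin n)) : ℝ :=
  alphaQ p μ S S' / lamQ lam S

open scoped Classical in
/-- The union of all nonempty subsets `S ⊆ I` minimizing `f(· | p, μ, λ, S')` over the
nonempty subsets of `I` (the "largest-cardinality minimizer"). -/
noncomputable def unionMin {n m : ℕ} (p : Fin n → Fin m → ℝ) (μ : Fin m → ℝ) (lam : Fin n → ℝ)
    (I S' : Finset (Fin n)) : Finset (Fin n) :=
  I.powerset.sup fun S =>
    if S.Nonempty ∧ ∀ T ∈ I.powerset, T.Nonempty → fQ p μ lam S S' ≤ fQ p μ lam T S' then S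
    else ∅

/-- The group selected by one step of the rate algorithm on remaining queues `I`
with current (already discounted) service rates `μ`. -/
noncomputable def topSet {n m : ℕ} (p : Fin n → Fin m → ℝ) (μ : Fin m → ℝ) (lam : Fin n → ℝ)
    (I : Finset (Fin n)) : Finset (Fin n) :=
  unionMin p μ lam I ∅

open scoped Classical in
/-- Fuelled version of the recursive rate algorithm: `I` is the set of remaining queues
and `μc` the current (discounted) service rates. -/
noncomputable def rateAux {n m : ℕ} (lam : Fin n → ℝ) (p : Fin n → Fin m → ℝ) :
    ℕ → Finset (Fin n) → (Fin m → ℝ) → Fin n → ℝ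
  | 0, _, _, _ => 0
  | fuel + 1, I, μc, i =>
    if ∀ S ∈ I.powerset, S.Nonempty → 1 ≤ fQ p μc lam S ∅ then 0
    else if i ∈ topSet p μc lam I then 1 - fQ p μc lam (topSet p μc lam I) ∅
    else
      rateAux lam p fuel (I \ topSet p μc lam I)
        (fun j => μc j * ∏ r ∈ topSet p μc lam I, (1 - p r j)) i

/-- The rate function `r : (Δ^{m-1})^n → [0,1]^n` computed by the recursive algorithm:
`rateQ lam μ p i` is the long-run aging rate `r_i(p)` of queue `i`. -/
noncomputable def rateQ {n m : ℕ} (lam : Fin n → ℝ) (μ : Fin m → ℝ)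
    (p : Fin n → Fin m → ℝ) (i : Fin n) : ℝ :=
  rateAux lam p (n + 1) Finset.univ μ i


open scoped Classical

section Basics
variable {n m : ℕ} {p : Fin n → Fin m → ℝ} {μ μc : Fin m → ℝ} {lam : Fin n → ℝ}

def validP (p : Fin n → Fin m → ℝ) : Prop := ∀ r j, 0 ≤ p r j ∧ p r j ≤ 1

lemma inSimplex.le_one {x : Fin m → ℝ} (hx : inSimplex x) (j : Fin m) : x j ≤ 1 := by
  rcases hx with ⟨h0, h1⟩
  calc x j ≤ ∑ k, x k := Finset.single_le_sum (fun k _ => h0 k) (Finset.mem_univ j)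
  _ = 1 := h1

lemma validP_update {x : Fin m → ℝ} {i : Fin n} (hp : ∀ r, inSimplex (p r))
    (hx : inSimplex x) : validP (Function.update p i x) := by
  intro r j
  rcases eq_or_ne r i with rfl | hr
  · simp only [Function.update_self]
    exact ⟨hx.1 j, hx.le_one j⟩
  · simp only [Function.update_of_ne hr]
    exact ⟨(hp r).1 j, (hp r).le_one j⟩

lemma prod_one_sub_nonneg (hq : validP p) (S : Finset (Fin n)) (j : Fin m) :
    0 ≤ ∏ r ∈ S, (1 - p r j) :=
  Finset.prod_nonneg fun r _ => by linarith [(hq r j).2]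

lemma prod_one_sub_le_one (hq : validP p) (S : Finset (Fin n)) (j : Fin m) :
    ∏ r ∈ S, (1 - p r j) ≤ 1 :=
  Finset.prod_le_one (fun r _ => by linarith [(hq r j).2]) (fun r _ => by linarith [(hq r j).1])

lemma alphaQ_nonneg (hq : validP p) (hμ : ∀ j, 0 ≤ μc j) (S W : Finset (Fin n)) :
    0 ≤ alphaQ p μc S W := by
  refine Finset.sum_nonneg fun j _ => ?_
  have h1 := prod_one_sub_nonneg hq W j
  have h2 := prod_one_sub_le_one hq S j
  exact mul_nonneg (mul_nonneg (hμ j) h1) (by linarith)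

lemma alphaQ_empty (S' : Finset (Fin n)) : alphaQ p μc (∅ : Finset (Fin n)) S' = 0 := by
  simp [alphaQ]

lemma lamQ_empty : lamQ lam (∅ : Finset (Fin n)) = 0 := by simp [lamQ]

lemma lamQ_nonneg (hlam : ∀ i, 0 < lam i) (S : Finset (Fin n)) : 0 ≤ lamQ lam S :=
  Finset.sum_nonneg fun r _ => (hlam r).le

lemma lamQ_pos (hlam : ∀ i, 0 < lam i) {S : Finset (Fin n)} (hS : S.Nonempty) :
    0 < lamQ lam S :=
  Finset.sum_pos (fun r _ => hlam r) hS

lemma lamQ_union {S T : Finset (Fin n)} (h : Disjoint S T) :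
    lamQ lam (S ∪ T) = lamQ lam S + lamQ lam T := Finset.sum_union h

lemma alphaQ_union {S T W : Finset (Fin n)} (hST : Disjoint S T) (hWS : Disjoint W S) :
    alphaQ p μc (S ∪ T) W = alphaQ p μc S W + alphaQ p μc T (W ∪ S) := by
  rw [alphaQ, alphaQ, alphaQ, ← Finset.sum_add_distrib]
  refine Finset.sum_congr rfl fun j _ => ?_
  rw [Finset.prod_union hST, Finset.prod_union hWS]
  ring

lemma alphaQ_anti (hq : validP p) (hμ : ∀ j, 0 ≤ μc j) {S W W' : Finset (Fin n)}
    (hWW : W ⊆ W') : alphaQ p μc S W' ≤ alphaQ p μc S W := by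
  refine Finset.sum_le_sum fun j _ => ?_
  have h1 : ∏ r ∈ W', (1 - p r j) ≤ ∏ r ∈ W, (1 - p r j) := by
    rw [← Finset.prod_sdiff hWW]
    have h3 := prod_one_sub_le_one hq (W' \ W) j
    have h4 := prod_one_sub_nonneg hq (W' \ W) j
    have h5 := prod_one_sub_nonneg hq W j
    nlinarith
  have h2 : 0 ≤ 1 - ∏ r ∈ S, (1 - p r j) := by linarith [prod_one_sub_le_one hq S j]
  exact mul_le_mul_of_nonneg_right (mul_le_mul_of_nonneg_left h1 (hμ j)) h2

lemma prod_inter_sdiff_aux (f : Fin n → ℝ) (S T : Finset (Fin n)) :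
    ∏ r ∈ S, f r = (∏ r ∈ S ∩ T, f r) * ∏ r ∈ S \ T, f r := by
  rw [Finset.prod_inter_mul_prod_diff]

lemma alphaQ_submod (hq : validP p) (hμ : ∀ j, 0 ≤ μc j) (S T W : Finset (Fin n)) :
    alphaQ p μc (S ∪ T) W + alphaQ p μc (S ∩ T) W ≤ alphaQ p μc S W + alphaQ p μc T W := by
  rw [alphaQ, alphaQ, alphaQ, alphaQ, ← Finset.sum_add_distrib, ← Finset.sum_add_distrib]
  refine Finset.sum_le_sum fun j _ => ?_
  have hS : ∏ r ∈ S, (1 - p r j) = (∏ r ∈ S ∩ T, (1 - p r j)) * ∏ r ∈ S \ T, (1 - p r j) :=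
    prod_inter_sdiff_aux _ S T
  have hT : ∏ r ∈ T, (1 - p r j) = (∏ r ∈ S ∩ T, (1 - p r j)) * ∏ r ∈ T \ S, (1 - p r j) := by
    rw [prod_inter_sdiff_aux (fun r => 1 - p r j) T S, Finset.inter_comm]
  have hST : ∏ r ∈ S ∪ T, (1 - p r j)
      = (∏ r ∈ S ∩ T, (1 - p r j)) * (∏ r ∈ S \ T, (1 - p r j)) * ∏ r ∈ T \ S, (1 - p r j) := by
    rw [← hS, ← Finset.prod_union Finset.disjoint_sdiff]
    congr 1
    ext a
    simp only [Finset.mem_union, Finset.mem_sdiff]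
    tauto
  set u := ∏ r ∈ S ∩ T, (1 - p r j)
  set s' := ∏ r ∈ S \ T, (1 - p r j)
  set t' := ∏ r ∈ T \ S, (1 - p r j)
  have hu : 0 ≤ u := prod_one_sub_nonneg hq _ j
  have hs1 : s' ≤ 1 := prod_one_sub_le_one hq _ j
  have ht1 : t' ≤ 1 := prod_one_sub_le_one hq _ j
  have hs0 : 0 ≤ s' := prod_one_sub_nonneg hq _ j
  have ht0 : 0 ≤ t' := prod_one_sub_nonneg hq _ j
  have hμj := hμ j
  have hWn := prod_one_sub_nonneg hq W j
  rw [hS, hT, hST]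
  have key : u * s' + u * t' ≤ u * s' * t' + u := by
    nlinarith [mul_nonneg hu (mul_nonneg (by linarith : (0:ℝ) ≤ 1 - s')
      (by linarith : (0:ℝ) ≤ 1 - t'))]
  nlinarith [mul_le_mul_of_nonneg_left key (mul_nonneg hμj hWn)]

/-- discount translation: current rates `μc = μ · ∏_U` turn prior `W` into prior `U ∪ W`. -/
lemma alphaQ_discount {U W S : Finset (Fin n)}
    (hμc : ∀ j, μc j = μ j * ∏ r ∈ U, (1 - p r j)) (hUW : Disjoint U W) :
    alphaQ p μc S W = alphaQ p μ S (U ∪ W) := by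
  refine Finset.sum_congr rfl fun j _ => ?_
  rw [hμc j, Finset.prod_union hUW]
  ring

lemma fQ_nonneg (hq : validP p) (hμ : ∀ j, 0 ≤ μc j) (hlam : ∀ i, 0 < lam i)
    (S W : Finset (Fin n)) : 0 ≤ fQ p μc lam S W :=
  div_nonneg (alphaQ_nonneg hq hμ S W) (lamQ_nonneg hlam S)

lemma fQ_le_iff (hlam : ∀ i, 0 < lam i) {S : Finset (Fin n)} (hS : S.Nonempty)
    {W : Finset (Fin n)} {c : ℝ} : fQ p μc lam S W ≤ c ↔ alphaQ p μc S W ≤ c * lamQ lam S :=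
  div_le_iff₀ (lamQ_pos hlam hS)

lemma le_fQ_iff (hlam : ∀ i, 0 < lam i) {S : Finset (Fin n)} (hS : S.Nonempty)
    {W : Finset (Fin n)} {c : ℝ} : c ≤ fQ p μc lam S W ↔ c * lamQ lam S ≤ alphaQ p μc S W :=
  le_div_iff₀ (lamQ_pos hlam hS)

lemma lt_fQ_iff (hlam : ∀ i, 0 < lam i) {S : Finset (Fin n)} (hS : S.Nonempty)
    {W : Finset (Fin n)} {c : ℝ} : c < fQ p μc lam S W ↔ c * lamQ lam S < alphaQ p μc S W :=
  lt_div_iff₀ (lamQ_pos hlam hS)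

lemma fQ_eq_of_alpha (hlam : ∀ i, 0 < lam i) {S : Finset (Fin n)} (hS : S.Nonempty)
    {W : Finset (Fin n)} {c : ℝ} (h : alphaQ p μc S W = c * lamQ lam S) :
    fQ p μc lam S W = c := by
  rw [fQ, h]
  field_simp [(lamQ_pos hlam hS).ne']

lemma alpha_eq_of_fQ (hlam : ∀ i, 0 < lam i) {S : Finset (Fin n)} (hS : S.Nonempty)
    (W : Finset (Fin n)) :
    alphaQ p μc S W = fQ p μc lam S W * lamQ lam S := by
  rw [fQ]
  field_simp [(lamQ_pos hlam hS).ne']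

end Basics

section Chain
variable {n m : ℕ}

/-- union of a list of groups -/
def chainUnion {n : ℕ} : List (Finset (Fin n)) → Finset (Fin n)
  | [] => ∅
  | T :: L => T ∪ chainUnion L

/-- `GoodChain p μ lam U L c`: starting from prior set `U`, the list `L` is a sequence of
groups, each disjoint from everything before, each uniformly at least as dense as all its
subsets, and each with density at most `c`. -/
def GoodChain (p : Fin n → Fin m → ℝ) (μ : Fin m → ℝ) (lam : Fin n → ℝ) :
    Finset (Fin n) → List (Finset (Fin n)) → ℝ → Prop
  | _, [], _ => True
  | U, T :: L, c => T ⊆ Uᶜ ∧ (∀ R ⊆ T, R.Nonempty → fQ p μ lam T U ≤ fQ p μ lam R U) ∧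
      fQ p μ lam T U ≤ c ∧ GoodChain p μ lam (U ∪ T) L c

variable {p : Fin n → Fin m → ℝ} {μ : Fin m → ℝ} {lam : Fin n → ℝ}


lemma inter_union_sdiff_self (S Z : Finset (Fin n)) : S ∩ Z ∪ S \ Z = S := by
  ext a; simp only [Finset.mem_union, Finset.mem_inter, Finset.mem_sdiff]; tauto

lemma chainUnion_append (L1 L2 : List (Finset (Fin n))) :
    chainUnion (L1 ++ L2) = chainUnion L1 ∪ chainUnion L2 := by
  induction L1 with
  | nil => simp [chainUnion]
  | cons T L ih => simp [chainUnion, ih, Finset.union_assoc]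

lemma GoodChain.mono {U : Finset (Fin n)} {L : List (Finset (Fin n))} {c c' : ℝ}
    (h : GoodChain p μ lam U L c) (hcc : c ≤ c') : GoodChain p μ lam U L c' := by
  induction L generalizing U with
  | nil => trivial
  | cons T L ih =>
    obtain ⟨h1, h2, h3, h4⟩ := h
    exact ⟨h1, h2, h3.trans hcc, ih h4⟩

lemma GoodChain.subset {U : Finset (Fin n)} {L : List (Finset (Fin n))} {c : ℝ}
    (h : GoodChain p μ lam U L c) : chainUnion L ⊆ Uᶜ := by
  induction L generalizing U with
  | nil => simp [chainUnion]
  | cons T L ih =>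
    obtain ⟨h1, _, _, h4⟩ := h
    rw [chainUnion]
    refine Finset.union_subset h1 ((ih h4).trans ?_)
    intro a ha
    simp only [Finset.mem_compl, Finset.mem_union, not_or] at ha ⊢
    exact ha.1

lemma GoodChain.append {U : Finset (Fin n)} {L1 L2 : List (Finset (Fin n))} {c : ℝ}
    (h1 : GoodChain p μ lam U L1 c) (h2 : GoodChain p μ lam (U ∪ chainUnion L1) L2 c) :
    GoodChain p μ lam U (L1 ++ L2) c := by
  induction L1 generalizing U with
  | nil =>
    simpa [chainUnion] using h2
  | cons T L ih =>
    obtain ⟨g1, g2, g3, g4⟩ := h1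
    refine ⟨g1, g2, g3, ih g4 ?_⟩
    rw [chainUnion] at h2
    rwa [Finset.union_assoc]

/-- The key combinatorial estimate: if `Z` contains the base prior `U` and avoids `i`, and
`S` is a final group of density `≤ Θ` all of whose `i`-free subsets have density `≥ Θ`, then
the part of the chain-union together with `S` outside `Z` has density at most `Θ` given `Z`. -/
lemma calc_bound (hq : validP p) (hlam : ∀ i, 0 < lam i) (hμ : ∀ j, 0 ≤ μ j) (i : Fin n)
    (Θ : ℝ) :
    ∀ (L : List (Finset (Fin n))) (U Z S : Finset (Fin n)),
    GoodChain p μ lam U L Θ →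
    S ⊆ (U ∪ chainUnion L)ᶜ →
    alphaQ p μ S (U ∪ chainUnion L) ≤ Θ * lamQ lam S →
    (∀ R ⊆ S \ {i}, Θ * lamQ lam R ≤ alphaQ p μ R (U ∪ chainUnion L)) →
    U ⊆ Z → i ∉ Z → i ∉ chainUnion L →
    alphaQ p μ ((chainUnion L ∪ S) \ Z) Z ≤ Θ * lamQ lam ((chainUnion L ∪ S) \ Z) := by
  intro L
  induction L with
  | nil =>
    intro U Z S _ hSsub hS1 hS2 hUZ hiZ _
    simp only [chainUnion, Finset.union_empty, Finset.empty_union] at hSsub hS1 hS2 ⊢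
    -- decompose S = (S ∩ Z) ∪ (S \ Z)
    have hdisj1 : Disjoint (S ∩ Z) (S \ Z) :=
      Finset.disjoint_sdiff.mono_left Finset.inter_subset_right
    have hdisjUS : Disjoint U S := by
      rw [Finset.disjoint_right]
      intro a haS
      have := hSsub haS
      simp only [Finset.mem_compl] at this
      exact fun haU => this haU
    have hdec : alphaQ p μ S U
        = alphaQ p μ (S ∩ Z) U + alphaQ p μ (S \ Z) (U ∪ S ∩ Z) := by
      rw [← alphaQ_union hdisj1 (hdisjUS.mono_right Finset.inter_subset_left),
        inter_union_sdiff_self S Z]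
    have hanti : alphaQ p μ (S \ Z) Z ≤ alphaQ p μ (S \ Z) (U ∪ S ∩ Z) := by
      refine alphaQ_anti hq hμ ?_
      exact Finset.union_subset hUZ Finset.inter_subset_right
    have hlow : Θ * lamQ lam (S ∩ Z) ≤ alphaQ p μ (S ∩ Z) U := by
      refine hS2 _ ?_
      intro a ha
      simp only [Finset.mem_inter] at ha
      simp only [Finset.mem_sdiff, Finset.mem_singleton]
      exact ⟨ha.1, fun h => hiZ (h ▸ ha.2)⟩
    have hlamdec : lamQ lam S = lamQ lam (S ∩ Z) + lamQ lam (S \ Z) := by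
      rw [← lamQ_union hdisj1, inter_union_sdiff_self S Z]
    have h' : Θ * lamQ lam S = Θ * lamQ lam (S ∩ Z) + Θ * lamQ lam (S \ Z) := by
      rw [hlamdec]; ring
    linarith
  | cons T L ih =>
    intro U Z S hGC hSsub hS1 hS2 hUZ hiZ hiL
    obtain ⟨hTU, hTuni, hTc, hGC'⟩ := hGC
    have hiT : i ∉ T := fun h => hiL (by rw [chainUnion]; exact Finset.mem_union_left _ h)
    have hiL' : i ∉ chainUnion L := fun h => hiL (by rw [chainUnion]; exact Finset.mem_union_right _ h)
    have hWeq : U ∪ chainUnion (T :: L) = (U ∪ T) ∪ chainUnion L := by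
      rw [chainUnion, Finset.union_assoc]
    -- sets
    set K := chainUnion L with hK
    have hKsub : K ⊆ (U ∪ T)ᶜ := hGC'.subset
    have hTK : Disjoint T K := by
      rw [Finset.disjoint_left]
      intro a haT haK
      have := hKsub haK
      simp [Finset.mem_compl, Finset.mem_union] at this
      exact this.2 haT
    have hST : Disjoint S T := by
      rw [Finset.disjoint_left]
      intro a haS haT
      have := hSsub haS
      simp only [Finset.mem_compl, hWeq, Finset.mem_union, not_or] at this
      exact this.1.2 haT
    -- split X = (T \ Z) ∪ ((K ∪ S) \ Z)
    have hXsplit : (chainUnion (T :: L) ∪ S) \ Z = (T \ Z) ∪ ((K ∪ S) \ Z) := by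
      rw [chainUnion, ← hK]
      rw [Finset.union_assoc, Finset.union_sdiff_distrib]
    have hdisjX : Disjoint (T \ Z) ((K ∪ S) \ Z) := by
      refine Finset.disjoint_left.2 fun a ha hb => ?_
      simp only [Finset.mem_sdiff, Finset.mem_union] at ha hb
      rcases hb.1 with h | h
      · exact (Finset.disjoint_left.1 hTK) ha.1 h
      · exact (Finset.disjoint_left.1 hST) h ha.1
    have hZTZ : Disjoint Z (T \ Z) := Finset.disjoint_sdiff
    have hdec : alphaQ p μ ((T \ Z) ∪ ((K ∪ S) \ Z)) Z
        = alphaQ p μ (T \ Z) Z + alphaQ p μ ((K ∪ S) \ Z) (Z ∪ (T \ Z)) :=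
      alphaQ_union hdisjX hZTZ
    -- bound the T part
    have hTpart : alphaQ p μ (T \ Z) Z ≤ Θ * lamQ lam (T \ Z) := by
      rcases Finset.eq_empty_or_nonempty T with rfl | hTne
      · simp [alphaQ_empty, Finset.empty_sdiff, lamQ_empty]
      · have hd0 : 0 ≤ fQ p μ lam T U := fQ_nonneg hq hμ hlam T U
        have hαT : alphaQ p μ T U = fQ p μ lam T U * lamQ lam T := alpha_eq_of_fQ hlam hTne U
        have hdisj1 : Disjoint (T ∩ Z) (T \ Z) :=
          Finset.disjoint_sdiff.mono_left Finset.inter_subset_right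
        have hdisjUT : Disjoint U T := by
          rw [Finset.disjoint_right]
          intro a haT
          have := hTU haT
          simp only [Finset.mem_compl] at this
          exact fun haU => this haU
        have hdecT : alphaQ p μ T U
            = alphaQ p μ (T ∩ Z) U + alphaQ p μ (T \ Z) (U ∪ T ∩ Z) := by
          rw [← alphaQ_union hdisj1 (hdisjUT.mono_right Finset.inter_subset_left),
            inter_union_sdiff_self T Z]
        have hanti : alphaQ p μ (T \ Z) Z ≤ alphaQ p μ (T \ Z) (U ∪ T ∩ Z) :=
          alphaQ_anti hq hμ (Finset.union_subset hUZ Finset.inter_subset_right)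
        have hlow : fQ p μ lam T U * lamQ lam (T ∩ Z) ≤ alphaQ p μ (T ∩ Z) U := by
          rcases Finset.eq_empty_or_nonempty (T ∩ Z) with he | hne
          · simp [he, alphaQ_empty, lamQ_empty]
          · exact (le_fQ_iff hlam hne).1 (hTuni _ Finset.inter_subset_left hne)
        have hlamdec : lamQ lam T = lamQ lam (T ∩ Z) + lamQ lam (T \ Z) := by
          rw [← lamQ_union hdisj1, inter_union_sdiff_self T Z]
        have hlamnn : 0 ≤ lamQ lam (T \ Z) := lamQ_nonneg hlam _
        nlinarith
    -- bound the rest by induction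
    have heqset : (K ∪ S) \ (Z ∪ (T \ Z)) = (K ∪ S) \ Z := by
      ext a
      simp only [Finset.mem_sdiff, Finset.mem_union, not_or, Finset.mem_sdiff]
      constructor
      · rintro ⟨h1, h2, _⟩; exact ⟨h1, h2⟩
      · rintro ⟨h1, h2⟩
        refine ⟨h1, h2, ?_⟩
        rintro ⟨haT, -⟩
        rcases h1 with h | h
        · exact (Finset.disjoint_left.1 hTK) haT h
        · exact (Finset.disjoint_left.1 hST) h haT
    have hrest : alphaQ p μ ((K ∪ S) \ Z) (Z ∪ (T \ Z)) ≤ Θ * lamQ lam ((K ∪ S) \ Z) := by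
      have := ih (U ∪ T) (Z ∪ (T \ Z)) S hGC'
        (by rwa [hWeq] at hSsub) (by rwa [hWeq] at hS1) (by rw [← hWeq]; exact hS2)
        (by
          refine Finset.union_subset (hUZ.trans Finset.subset_union_left) ?_
          intro a haT
          by_cases haZ : a ∈ Z
          · exact Finset.mem_union_left _ haZ
          · exact Finset.mem_union_right _ (Finset.mem_sdiff.2 ⟨haT, haZ⟩))
        (by
          simp only [Finset.mem_union, Finset.mem_sdiff, not_or]
          exact ⟨hiZ, fun h => hiT h.1⟩)
        hiL'
      rwa [heqset] at this
    rw [hXsplit, hdec, lamQ_union hdisjX]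
    have h' : Θ * (lamQ lam (T \ Z) + lamQ lam ((K ∪ S) \ Z))
        = Θ * lamQ lam (T \ Z) + Θ * lamQ lam ((K ∪ S) \ Z) := by ring
    linarith

section TopSet
variable {n m : ℕ} {p : Fin n → Fin m → ℝ} {μc : Fin m → ℝ} {lam : Fin n → ℝ}

/-- `topSet` is a nonempty subset of `I` minimizing `fQ · ∅` over nonempty subsets of `I`. -/
lemma topSet_spec (hq : validP p) (hμ : ∀ j, 0 ≤ μc j) (hlam : ∀ i, 0 < lam i)
    {I : Finset (Fin n)} (hI : I.Nonempty) :
    topSet p μc lam I ⊆ I ∧ (topSet p μc lam I).Nonempty ∧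
      ∀ T ⊆ I, T.Nonempty → fQ p μc lam (topSet p μc lam I) ∅ ≤ fQ p μc lam T ∅ := by
  classical
  set pred : Finset (Fin n) → Prop := fun S =>
    S.Nonempty ∧ ∀ T ∈ I.powerset, T.Nonempty → fQ p μc lam S ∅ ≤ fQ p μc lam T ∅ with hpred
  have hexists : ∃ S, S ⊆ I ∧ pred S := by
    obtain ⟨S₀, hS₀mem, hS₀min⟩ := Finset.exists_min_image
      (I.powerset.filter (fun S => S.Nonempty)) (fun S => fQ p μc lam S ∅)
      ⟨I, by simp [Finset.mem_filter, hI]⟩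
    simp only [Finset.mem_filter, Finset.mem_powerset] at hS₀mem
    refine ⟨S₀, hS₀mem.1, hS₀mem.2, fun T hT hTne => ?_⟩
    exact hS₀min T (by simp [Finset.mem_filter, Finset.mem_powerset, hT, hTne])
  -- the property preserved by unions
  have htop : topSet p μc lam I = I.powerset.sup (fun S => if pred S then S else ∅) := by
    rw [topSet, unionMin]
  have hP : topSet p μc lam I ⊆ I ∧ (topSet p μc lam I = ∅ ∨ pred (topSet p μc lam I)) := by
    rw [htop]
    refine Finset.sup_induction (p := fun s => s ⊆ I ∧ (s = ∅ ∨ pred s))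
      ⟨bot_le, Or.inl bot_eq_empty⟩ ?_ ?_
    · rintro a ⟨haI, ha⟩ b ⟨hbI, hb⟩
      rw [Finset.sup_eq_union]
      refine ⟨Finset.union_subset haI hbI, ?_⟩
      rcases ha with rfl | ha
      · simpa using hb
      rcases hb with rfl | hb
      · simpa using Or.inr ha
      right
      have hane := ha.1
      have hbne := hb.1
      refine ⟨hane.mono Finset.subset_union_left, fun T hT hTne => ?_⟩
      have hfa := ha.2
      have hfb := hb.2
      set f' := fQ p μc lam a ∅ with hf'
      have hfbeq : fQ p μc lam b ∅ = f' :=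
        le_antisymm (hfb a (Finset.mem_powerset.2 haI) hane) (hfa b (Finset.mem_powerset.2 hbI) hbne)
      have hαa : alphaQ p μc a ∅ = f' * lamQ lam a := alpha_eq_of_fQ hlam hane ∅
      have hαb : alphaQ p μc b ∅ = f' * lamQ lam b := by
        rw [alpha_eq_of_fQ hlam hbne ∅, hfbeq]
      have hαint : f' * lamQ lam (a ∩ b) ≤ alphaQ p μc (a ∩ b) ∅ := by
        rcases Finset.eq_empty_or_nonempty (a ∩ b) with he | hne
        · simp [he, alphaQ_empty, lamQ_empty]
        · exact (le_fQ_iff hlam hne).1 (hfa _ (Finset.mem_powerset.2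
            (Finset.inter_subset_left.trans haI)) hne)
      have hsub := alphaQ_submod hq hμ a b ∅
      have hlamie : lamQ lam (a ∪ b) + lamQ lam (a ∩ b) = lamQ lam a + lamQ lam b := by
        rw [lamQ, lamQ, lamQ, lamQ]
        exact Finset.sum_union_inter
      have hdist : f' * lamQ lam (a ∪ b) + f' * lamQ lam (a ∩ b)
          = f' * lamQ lam a + f' * lamQ lam b := by
        rw [← mul_add, ← mul_add, hlamie]
      have hm : alphaQ p μc (a ∪ b) ∅ ≤ f' * lamQ lam (a ∪ b) := by linarith
      have hun : fQ p μc lam (a ∪ b) ∅ ≤ f' :=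
        (fQ_le_iff hlam (hane.mono Finset.subset_union_left)).2 hm
      exact hun.trans (hfa T hT hTne)
    · intro S hS
      by_cases hc : pred S
      · rw [if_pos hc]
        exact ⟨Finset.mem_powerset.1 hS, Or.inr hc⟩
      · rw [if_neg hc]
        exact ⟨Finset.empty_subset I, Or.inl rfl⟩
  obtain ⟨S₀, hS₀I, hS₀⟩ := hexists
  have hle : S₀ ⊆ topSet p μc lam I := by
    rw [htop]
    have h := Finset.le_sup (f := fun S => if pred S then S else ∅)
      (Finset.mem_powerset.2 hS₀I)
    rw [if_pos hS₀] at h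
    exact h
  have hne : (topSet p μc lam I).Nonempty := hS₀.1.mono hle
  rcases hP.2 with he | hpredT
  · rw [he] at hne
    exact absurd hne Finset.not_nonempty_empty
  exact ⟨hP.1, hne, fun T hT hTne => hpredT.2 T (Finset.mem_powerset.2 hT) hTne⟩

/-- weak monotonicity: after removing the min-density group `T`, every remaining set has
conditional density at least the min value. -/
lemma next_min (hq : validP p) (hμ : ∀ j, 0 ≤ μc j) (hlam : ∀ i, 0 < lam i)
    {I T : Finset (Fin n)} (hTI : T ⊆ I) (hTne : T.Nonempty)
    (hmin : ∀ R ⊆ I, R.Nonempty → fQ p μc lam T ∅ ≤ fQ p μc lam R ∅)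
    {R : Finset (Fin n)} (hR : R ⊆ I \ T) (hRne : R.Nonempty) :
    fQ p μc lam T ∅ * lamQ lam R ≤ alphaQ p μc R T := by
  set f' := fQ p μc lam T ∅
  have hdisj : Disjoint T R := Finset.disjoint_sdiff.mono_right hR
  have hdec : alphaQ p μc (T ∪ R) ∅ = alphaQ p μc T ∅ + alphaQ p μc R (∅ ∪ T) :=
    alphaQ_union hdisj (Finset.disjoint_left.2 (by simp))
  rw [Finset.empty_union] at hdec
  have hTR : T ∪ R ⊆ I := Finset.union_subset hTI (hR.trans (Finset.sdiff_subset))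
  have hTRne : (T ∪ R).Nonempty := hTne.mono Finset.subset_union_left
  have h1 : f' * lamQ lam (T ∪ R) ≤ alphaQ p μc (T ∪ R) ∅ :=
    (le_fQ_iff hlam hTRne).1 (hmin _ hTR hTRne)
  have h2 : alphaQ p μc T ∅ = f' * lamQ lam T := alpha_eq_of_fQ hlam hTne ∅
  have h3 : lamQ lam (T ∪ R) = lamQ lam T + lamQ lam R := lamQ_union hdisj
  have h4 : f' * lamQ lam (T ∪ R) = f' * lamQ lam T + f' * lamQ lam R := by rw [h3]; ring
  linarith

end TopSet

section Alg
variable {n m : ℕ} {p : Fin n → Fin m → ℝ} {μ : Fin m → ℝ} {lam : Fin n → ℝ} {i : Fin n}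

lemma rateAux_succ (fuel : ℕ) (I : Finset (Fin n)) (μc : Fin m → ℝ) :
    rateAux lam p (fuel + 1) I μc i =
      if ∀ S ∈ I.powerset, S.Nonempty → 1 ≤ fQ p μc lam S ∅ then 0
      else if i ∈ topSet p μc lam I then 1 - fQ p μc lam (topSet p μc lam I) ∅
      else rateAux lam p fuel (I \ topSet p μc lam I)
        (fun j => μc j * ∏ r ∈ topSet p μc lam I, (1 - p r j)) i := rfl

/-- translation of `fQ` with discounted rates and empty prior into original rates. -/
lemma fQ_discount {μc : Fin m → ℝ} {U : Finset (Fin n)}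
    (hμc : ∀ j, μc j = μ j * ∏ r ∈ U, (1 - p r j)) (S : Finset (Fin n)) :
    fQ p μc lam S ∅ = fQ p μ lam S U := by
  rw [fQ, fQ, alphaQ_discount hμc (Finset.disjoint_empty_right U), Finset.union_empty]

lemma compl_union_eq (U T : Finset (Fin n)) : (U ∪ T)ᶜ = Uᶜ \ T := by
  ext a
  simp only [Finset.mem_compl, Finset.mem_union, Finset.mem_sdiff, not_or]

/-- L-PREFIX: if the algorithm gives `i` a value below `1 - Θ` (with `Θ < 1`), then there
is a prior set `Z` avoiding `i` outside of which every nonempty set has density `> Θ`. -/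
lemma rateAux_prefix (hq : validP p) (hμ : ∀ j, 0 ≤ μ j) (hlam : ∀ r, 0 < lam r) :
    ∀ (fuel : ℕ) (U : Finset (Fin n)) (μc : Fin m → ℝ) (Θ : ℝ),
    (∀ j, μc j = μ j * ∏ r ∈ U, (1 - p r j)) →
    Uᶜ.card < fuel → i ∈ Uᶜ → Θ < 1 →
    rateAux lam p fuel Uᶜ μc i < 1 - Θ →
    ∃ Z : Finset (Fin n), i ∉ Z ∧ ∀ R ⊆ Zᶜ, R.Nonempty → Θ < fQ p μ lam R Z := by
  intro fuel
  induction fuel with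
  | zero => intro U μc Θ _ hcard _ _ _; omega
  | succ fuel ih =>
    intro U μc Θ hμc hcard hiU hΘ hval
    have hμc0 : ∀ j, 0 ≤ μc j := fun j => by
      rw [hμc j]
      exact mul_nonneg (hμ j) (prod_one_sub_nonneg hq U j)
    rw [rateAux_succ] at hval
    by_cases h0 : ∀ S ∈ Uᶜ.powerset, S.Nonempty → 1 ≤ fQ p μc lam S ∅
    · refine ⟨U, by simpa using hiU, fun R hR hRne => ?_⟩
      have := h0 R (Finset.mem_powerset.2 hR) hRne
      rw [fQ_discount hμc] at this
      linarith
    · rw [if_neg h0] at hval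
      have hUne : (Uᶜ : Finset (Fin n)).Nonempty := ⟨i, hiU⟩
      obtain ⟨hTsub, hTne, hTmin⟩ := topSet_spec hq hμc0 hlam hUne
      set T := topSet p μc lam Uᶜ with hT
      have hf' : fQ p μc lam T ∅ = fQ p μ lam T U := fQ_discount hμc T
      by_cases hcase : Θ < fQ p μ lam T U
      · refine ⟨U, by simpa using hiU, fun R hR hRne => ?_⟩
        have := hTmin R hR hRne
        rw [hf', fQ_discount hμc] at this
        linarith
      · push_neg at hcase
        have hiT : i ∉ T := by
          intro hiT
          rw [if_pos hiT, hf'] at hval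
          linarith
        rw [if_neg hiT] at hval
        have hsd : Uᶜ \ T = (U ∪ T)ᶜ := (compl_union_eq U T).symm
        have hdisjUT : Disjoint U T := by
          rw [Finset.disjoint_left]
          intro a haU haT
          have := hTsub haT
          simp [Finset.mem_compl, haU] at this
        have hμc' : ∀ j, μc j * ∏ r ∈ T, (1 - p r j) = μ j * ∏ r ∈ U ∪ T, (1 - p r j) := by
          intro j
          rw [hμc j, Finset.prod_union hdisjUT]
          ring
        have hcard' : ((U ∪ T)ᶜ).card < fuel := by
          have hss : (U ∪ T)ᶜ ⊂ Uᶜ := by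
            rw [compl_union_eq]
            exact Finset.sdiff_ssubset hTsub hTne
          have := Finset.card_lt_card hss
          omega
        have hiU' : i ∈ (U ∪ T)ᶜ := by
          simp only [Finset.mem_compl, Finset.mem_union, not_or]
          exact ⟨by simpa using hiU, hiT⟩
        refine ih (U ∪ T) _ Θ hμc' hcard' hiU' hΘ ?_
        rw [← hsd] at *
        convert hval using 2

end Alg

section Out
variable {n m : ℕ} {p : Fin n → Fin m → ℝ} {μ : Fin m → ℝ} {lam : Fin n → ℝ} {i : Fin n}

/-- L-OUT: the output of the algorithm for `i` is either `0`, or `1 - f(S|W)` for a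
certificate `(L', S)` with good chain `L'`, `W = ⋃ L'`, `i ∈ S`, `f(S|W) < 1`, and all
`i`-free subsets of `S` at least as dense as `S`. -/
lemma rateAux_out (hq : validP p) (hμ : ∀ j, 0 ≤ μ j) (hlam : ∀ r, 0 < lam r) :
    ∀ (fuel : ℕ) (U : Finset (Fin n)) (μc : Fin m → ℝ) (c : ℝ) (L : List (Finset (Fin n))),
    (∀ j, μc j = μ j * ∏ r ∈ U, (1 - p r j)) →
    Uᶜ.card < fuel → i ∈ Uᶜ →
    GoodChain p μ lam ∅ L c → chainUnion L = U →
    (∀ R ⊆ Uᶜ, R.Nonempty → c ≤ fQ p μ lam R U) →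
    rateAux lam p fuel Uᶜ μc i = 0 ∨
    ∃ (L' : List (Finset (Fin n))) (S : Finset (Fin n)),
      i ∈ S ∧ S ⊆ (chainUnion L')ᶜ ∧
      GoodChain p μ lam ∅ L' (fQ p μ lam S (chainUnion L')) ∧
      fQ p μ lam S (chainUnion L') < 1 ∧
      (∀ R ⊆ S \ {i}, R.Nonempty →
        fQ p μ lam S (chainUnion L') ≤ fQ p μ lam R (chainUnion L')) ∧
      rateAux lam p fuel Uᶜ μc i = 1 - fQ p μ lam S (chainUnion L') := by
  intro fuel
  induction fuel with
  | zero => intro U μc c L _ hcard _ _ _ _; omega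
  | succ fuel ih =>
    intro U μc c L hμc hcard hiU hGC hLU hc
    have hμc0 : ∀ j, 0 ≤ μc j := fun j => by
      rw [hμc j]
      exact mul_nonneg (hμ j) (prod_one_sub_nonneg hq U j)
    rw [rateAux_succ]
    by_cases h0 : ∀ S ∈ Uᶜ.powerset, S.Nonempty → 1 ≤ fQ p μc lam S ∅
    · rw [if_pos h0]
      exact Or.inl rfl
    · rw [if_neg h0]
      have hUne : (Uᶜ : Finset (Fin n)).Nonempty := ⟨i, hiU⟩
      obtain ⟨hTsub, hTne, hTmin⟩ := topSet_spec hq hμc0 hlam hUne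
      set T := topSet p μc lam Uᶜ with hT
      have hf' : fQ p μc lam T ∅ = fQ p μ lam T U := fQ_discount hμc T
      have hTmin' : ∀ R ⊆ Uᶜ, R.Nonempty → fQ p μ lam T U ≤ fQ p μ lam R U := by
        intro R hR hRne
        have := hTmin R hR hRne
        rwa [hf', fQ_discount hμc] at this
      have hflt : fQ p μ lam T U < 1 := by
        push_neg at h0
        obtain ⟨S₁, hS₁mem, hS₁ne, hS₁lt⟩ := h0
        rw [fQ_discount hμc] at hS₁lt
        exact lt_of_le_of_lt (hTmin' S₁ (Finset.mem_powerset.1 hS₁mem) hS₁ne) hS₁lt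
      have hcT : c ≤ fQ p μ lam T U := hc T hTsub hTne
      by_cases hiT : i ∈ T
      · rw [if_pos hiT]
        refine Or.inr ⟨L, T, hiT, hLU ▸ hTsub, ?_, hLU ▸ hflt, ?_, by rw [hf', hLU]⟩
        · rw [hLU]
          exact hGC.mono hcT
        · intro R hR hRne
          rw [hLU]
          exact hTmin' R ((hR.trans (Finset.sdiff_subset)).trans hTsub) hRne
      · rw [if_neg hiT]
        have hsd : Uᶜ \ T = (U ∪ T)ᶜ := (compl_union_eq U T).symm
        have hdisjUT : Disjoint U T := by
          rw [Finset.disjoint_left]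
          intro a haU haT
          have := hTsub haT
          simp [Finset.mem_compl, haU] at this
        have hμc' : ∀ j, μc j * ∏ r ∈ T, (1 - p r j) = μ j * ∏ r ∈ U ∪ T, (1 - p r j) := by
          intro j
          rw [hμc j, Finset.prod_union hdisjUT]
          ring
        have hcard' : ((U ∪ T)ᶜ).card < fuel := by
          have hss : (U ∪ T)ᶜ ⊂ Uᶜ := by
            rw [compl_union_eq]
            exact Finset.sdiff_ssubset hTsub hTne
          have := Finset.card_lt_card hss
          omega
        have hiU' : i ∈ (U ∪ T)ᶜ := by
          simp only [Finset.mem_compl, Finset.mem_union, not_or]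
          exact ⟨by simpa using hiU, hiT⟩
        -- new chain
        have hGC' : GoodChain p μ lam ∅ (L ++ [T]) (fQ p μ lam T U) := by
          refine GoodChain.append (hGC.mono hcT) ?_
          rw [Finset.empty_union, hLU]
          refine ⟨hTsub, ?_, le_refl _, trivial⟩
          intro R hRT hRne
          exact hTmin' R (hRT.trans hTsub) hRne
        have hLU' : chainUnion (L ++ [T]) = U ∪ T := by
          rw [chainUnion_append, hLU]
          simp [chainUnion]
        -- new lower bound on remaining densities
        have hc' : ∀ R ⊆ (U ∪ T)ᶜ, R.Nonempty → fQ p μ lam T U ≤ fQ p μ lam R (U ∪ T) := by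
          intro R hR hRne
          have hnm := next_min hq hμc0 hlam hTsub hTne
            (fun R' hR' hR'ne => hTmin R' hR' hR'ne) (R := R) (by rwa [hsd]) hRne
          rw [hf'] at hnm
          have : alphaQ p μc R T = alphaQ p μ R (U ∪ T) :=
            alphaQ_discount hμc hdisjUT
          rw [this] at hnm
          exact (le_fQ_iff hlam hRne).2 hnm
        have := ih (U ∪ T) (fun j => μc j * ∏ r ∈ T, (1 - p r j)) (fQ p μ lam T U)
          (L ++ [T]) hμc' hcard' hiU' hGC' hLU' hc'
        rw [← hsd] at this
        exact this

end Out

section Key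
variable {n m : ℕ} {p : Fin n → Fin m → ℝ} {μ : Fin m → ℝ} {lam : Fin n → ℝ} {i : Fin n}

/-- KEY: any certificate `(L, S)` with `i ∈ S`, chain densities `≤ Θ < 1`, `f(S|W) ≤ Θ`, and
`i`-free subsets of `S` of density `≥ Θ`, forces the algorithm's value for `i` up to `1 - Θ`. -/
lemma key_lower (hq : validP p) (hμ : ∀ j, 0 ≤ μ j) (hlam : ∀ r, 0 < lam r)
    {Θ : ℝ} (hΘ : Θ < 1) {L : List (Finset (Fin n))} {S : Finset (Fin n)}
    (hiS : i ∈ S) (hSsub : S ⊆ (chainUnion L)ᶜ)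
    (hGC : GoodChain p μ lam ∅ L Θ)
    (hS1 : fQ p μ lam S (chainUnion L) ≤ Θ)
    (hS2 : ∀ R ⊆ S \ {i}, R.Nonempty → Θ ≤ fQ p μ lam R (chainUnion L)) :
    1 - Θ ≤ rateAux lam p (n + 1) Finset.univ μ i := by
  by_contra hcon
  push_neg at hcon
  have hμc : ∀ j, μ j = μ j * ∏ r ∈ (∅ : Finset (Fin n)), (1 - p r j) := by simp
  have hcard : ((∅ : Finset (Fin n))ᶜ).card < n + 1 := by
    rw [Finset.compl_empty]
    simp [Finset.card_univ]
  have hval : rateAux lam p (n + 1) (∅ : Finset (Fin n))ᶜ μ i < 1 - Θ := by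
    rwa [Finset.compl_empty]
  obtain ⟨Z, hiZ, hZ⟩ := rateAux_prefix hq hμ hlam (n + 1) ∅ μ Θ hμc hcard
    (by rw [Finset.compl_empty]; exact Finset.mem_univ i) hΘ hval
  set W := chainUnion L with hW
  set X := (W ∪ S) \ Z with hX
  have hiX : i ∈ X := by
    simp only [hX, Finset.mem_sdiff, Finset.mem_union]
    exact ⟨Or.inr hiS, hiZ⟩
  have hXne : X.Nonempty := ⟨i, hiX⟩
  have hXZ : X ⊆ Zᶜ := fun a ha => by
    simp only [hX, Finset.mem_sdiff] at ha
    simpa [Finset.mem_compl] using ha.2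
  have hgt := hZ X hXZ hXne
  have hgt' : Θ * lamQ lam X < alphaQ p μ X Z := (lt_fQ_iff hlam hXne).1 hgt
  have hSne : S.Nonempty := ⟨i, hiS⟩
  have hiW : i ∉ W := by
    have := hSsub hiS
    simpa [Finset.mem_compl] using this
  have hcb := calc_bound hq hlam hμ i Θ L ∅ Z S
    (by simpa using hGC)
    (by simpa using hSsub)
    (by simpa using (fQ_le_iff hlam hSne).1 hS1)
    (by
      intro R hR
      rcases Finset.eq_empty_or_nonempty R with rfl | hRne
      · simp [alphaQ_empty, lamQ_empty]
      · simpa using (le_fQ_iff hlam hRne).1 (hS2 R hR hRne))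
    (Finset.empty_subset Z) hiZ hiW
  rw [← hW, ← hX] at hcb
  linarith

end Key

section Transport
variable {n m : ℕ} {p : Fin n → Fin m → ℝ} {μ : Fin m → ℝ} {lam : Fin n → ℝ} {i : Fin n}

lemma prod_update_not_mem {x : Fin m → ℝ} {W : Finset (Fin n)} (hiW : i ∉ W) (j : Fin m) :
    ∏ r ∈ W, (1 - Function.update p i x r j) = ∏ r ∈ W, (1 - p r j) :=
  Finset.prod_congr rfl fun r hr => by
    rw [Function.update_of_ne (by rintro rfl; exact hiW hr)]

lemma prod_update_mem {x : Fin m → ℝ} {S : Finset (Fin n)} (hiS : i ∈ S) (j : Fin m) :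
    ∏ r ∈ S, (1 - Function.update p i x r j)
      = (1 - x j) * ∏ r ∈ S.erase i, (1 - p r j) := by
  rw [← Finset.mul_prod_erase S _ hiS, Function.update_self]
  congr 1
  exact Finset.prod_congr rfl fun r hr => by
    rw [Function.update_of_ne (Finset.ne_of_mem_erase hr)]

lemma alphaQ_update_indep {x y : Fin m → ℝ} {S W : Finset (Fin n)}
    (hiS : i ∉ S) (hiW : i ∉ W) :
    alphaQ (Function.update p i x) μ S W = alphaQ (Function.update p i y) μ S W := by
  refine Finset.sum_congr rfl fun j _ => ?_
  rw [prod_update_not_mem hiW, prod_update_not_mem hiS,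
    prod_update_not_mem (p := p) (x := y) hiW, prod_update_not_mem (p := p) (x := y) hiS]

lemma fQ_update_indep {x y : Fin m → ℝ} {S W : Finset (Fin n)}
    (hiS : i ∉ S) (hiW : i ∉ W) :
    fQ (Function.update p i x) μ lam S W = fQ (Function.update p i y) μ lam S W := by
  rw [fQ, fQ, alphaQ_update_indep hiS hiW]

lemma GoodChain_update_indep {x y : Fin m → ℝ} {c : ℝ} :
    ∀ {L : List (Finset (Fin n))} {U : Finset (Fin n)}, i ∉ U → i ∉ chainUnion L →
    GoodChain (Function.update p i x) μ lam U L c →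
    GoodChain (Function.update p i y) μ lam U L c := by
  intro L
  induction L with
  | nil => intro U _ _ _; trivial
  | cons T L ih =>
    intro U hiU hiL hGC
    obtain ⟨h1, h2, h3, h4⟩ := hGC
    have hiT : i ∉ T := fun h => hiL (by rw [chainUnion]; exact Finset.mem_union_left _ h)
    have hiL' : i ∉ chainUnion L := fun h =>
      hiL (by rw [chainUnion]; exact Finset.mem_union_right _ h)
    have hTtrans : fQ (Function.update p i y) μ lam T U
        = fQ (Function.update p i x) μ lam T U := fQ_update_indep hiT hiU
    refine ⟨h1, ?_, ?_, ?_⟩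
    · intro R hR hRne
      rw [hTtrans, fQ_update_indep (fun h => hiT (hR h)) hiU]
      exact h2 R hR hRne
    · rw [hTtrans]; exact h3
    · refine ih ?_ hiL' h4
      simp only [Finset.mem_union, not_or]
      exact ⟨hiU, hiT⟩

lemma alphaQ_update_affine {x y : Fin m → ℝ} {a b : ℝ} (hab : a + b = 1)
    {S W : Finset (Fin n)} (hiS : i ∈ S) (hiW : i ∉ W) :
    alphaQ (Function.update p i (fun j => a * x j + b * y j)) μ S W
      = a * alphaQ (Function.update p i x) μ S W
        + b * alphaQ (Function.update p i y) μ S W := by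
  rw [alphaQ, alphaQ, alphaQ, Finset.mul_sum, Finset.mul_sum, ← Finset.sum_add_distrib]
  refine Finset.sum_congr rfl fun j _ => ?_
  rw [prod_update_not_mem hiW, prod_update_mem hiS,
    prod_update_not_mem (p := p) (x := x) hiW, prod_update_mem (p := p) (x := x) hiS,
    prod_update_not_mem (p := p) (x := y) hiW, prod_update_mem (p := p) (x := y) hiS]
  set PW := ∏ r ∈ W, (1 - p r j)
  set C := ∏ r ∈ S.erase i, (1 - p r j)
  linear_combination (-(μ j * PW * (1 - C))) * hab

lemma fQ_update_affine {x y : Fin m → ℝ} {a b : ℝ} (hab : a + b = 1)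
    {S W : Finset (Fin n)} (hiS : i ∈ S) (hiW : i ∉ W) :
    fQ (Function.update p i (fun j => a * x j + b * y j)) μ lam S W
      = a * fQ (Function.update p i x) μ lam S W
        + b * fQ (Function.update p i y) μ lam S W := by
  rw [fQ, fQ, fQ, alphaQ_update_affine hab hiS hiW]
  ring

end Transport

section Refine
variable {n m : ℕ} {p : Fin n → Fin m → ℝ} {μ : Fin m → ℝ} {lam : Fin n → ℝ} {i : Fin n}

lemma fQ_empty (W : Finset (Fin n)) : fQ p μ lam (∅ : Finset (Fin n)) W = 0 := by
  simp [fQ, alphaQ_empty, lamQ_empty]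

/-- Refinement: peel off the union of all tight `i`-free subsets of `S` into a further
chain group, so that the remaining `i`-free subsets are strictly denser than `Θ`. -/
lemma refine_cert (hq : validP p) (hμ : ∀ j, 0 ≤ μ j) (hlam : ∀ r, 0 < lam r)
    {Θ : ℝ} {L : List (Finset (Fin n))} {S : Finset (Fin n)}
    (hiS : i ∈ S) (hSsub : S ⊆ (chainUnion L)ᶜ)
    (hGC : GoodChain p μ lam ∅ L Θ)
    (hEq : fQ p μ lam S (chainUnion L) = Θ)
    (hS2 : ∀ R ⊆ S \ {i}, R.Nonempty → Θ ≤ fQ p μ lam R (chainUnion L)) :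
    ∃ (L₂ : List (Finset (Fin n))) (S₂ : Finset (Fin n)),
      i ∈ S₂ ∧ S₂ ⊆ (chainUnion L₂)ᶜ ∧
      GoodChain p μ lam ∅ L₂ Θ ∧
      fQ p μ lam S₂ (chainUnion L₂) = Θ ∧
      (∀ R ⊆ S₂ \ {i}, R.Nonempty → Θ < fQ p μ lam R (chainUnion L₂)) := by
  classical
  set W := chainUnion L with hW
  have hSne : S.Nonempty := ⟨i, hiS⟩
  have hΘ0 : 0 ≤ Θ := hEq ▸ fQ_nonneg hq hμ hlam S W
  have hS2' : ∀ R ⊆ S \ {i}, Θ * lamQ lam R ≤ alphaQ p μ R W := by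
    intro R hR
    rcases Finset.eq_empty_or_nonempty R with rfl | hRne
    · simp [alphaQ_empty, lamQ_empty]
    · exact (le_fQ_iff hlam hRne).1 (hS2 R hR hRne)
  set tight : Finset (Fin n) → Prop := fun R => alphaQ p μ R W = Θ * lamQ lam R with htight
  set Rs : Finset (Fin n) :=
    (S \ {i}).powerset.sup (fun R => if tight R then R else ∅) with hRs
  have hP : Rs ⊆ S \ {i} ∧ tight Rs := by
    rw [hRs]
    refine Finset.sup_induction (p := fun s => s ⊆ S \ {i} ∧ tight s)
      ⟨bot_le, by simp [htight, bot_eq_empty, alphaQ_empty, lamQ_empty]⟩ ?_ ?_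
    · rintro a ⟨haS, ha⟩ b ⟨hbS, hb⟩
      rw [Finset.sup_eq_union]
      refine ⟨Finset.union_subset haS hbS, ?_⟩
      have hsub := alphaQ_submod hq hμ a b W
      have hint : Θ * lamQ lam (a ∩ b) ≤ alphaQ p μ (a ∩ b) W :=
        hS2' _ (Finset.inter_subset_left.trans haS)
      have hun : Θ * lamQ lam (a ∪ b) ≤ alphaQ p μ (a ∪ b) W :=
        hS2' _ (Finset.union_subset haS hbS)
      have hlamie : lamQ lam (a ∪ b) + lamQ lam (a ∩ b) = lamQ lam a + lamQ lam b := by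
        rw [lamQ, lamQ, lamQ, lamQ]; exact Finset.sum_union_inter
      have hdist : Θ * lamQ lam (a ∪ b) + Θ * lamQ lam (a ∩ b)
          = Θ * lamQ lam a + Θ * lamQ lam b := by rw [← mul_add, ← mul_add, hlamie]
      rw [htight] at ha hb ⊢
      have : alphaQ p μ (a ∪ b) W ≤ Θ * lamQ lam (a ∪ b) := by linarith
      linarith
    · intro R hR
      by_cases hc : tight R
      · rw [if_pos hc]
        exact ⟨Finset.mem_powerset.1 hR, hc⟩
      · rw [if_neg hc]
        exact ⟨Finset.empty_subset _, by simp [htight, alphaQ_empty, lamQ_empty]⟩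
  obtain ⟨hRsS, hRstight⟩ := hP
  have htight_sub : ∀ R ⊆ S \ {i}, tight R → R ⊆ Rs := by
    intro R hR htR
    have h := Finset.le_sup (f := fun R => if tight R then R else ∅)
      (Finset.mem_powerset.2 hR)
    rw [if_pos htR] at h
    exact h
  set S₂ := S \ Rs with hS₂
  have hiRs : i ∉ Rs := fun h => by simpa using (hRsS h)
  have hiS₂ : i ∈ S₂ := Finset.mem_sdiff.2 ⟨hiS, hiRs⟩
  have hS₂ne : S₂.Nonempty := ⟨i, hiS₂⟩
  have hRsSub : Rs ⊆ S := hRsS.trans (Finset.sdiff_subset)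
  have hdisjWRs : Disjoint W Rs := by
    rw [Finset.disjoint_right]
    intro a ha
    have := hSsub (hRsSub ha)
    simpa [Finset.mem_compl] using this
  have hdisjWS : Disjoint W S := by
    rw [Finset.disjoint_right]
    intro a ha
    have := hSsub ha
    simpa [Finset.mem_compl] using this
  set L₂ := L ++ [Rs] with hL₂
  have hW₂ : chainUnion L₂ = W ∪ Rs := by
    rw [hL₂, chainUnion_append, hW]
    simp [chainUnion]
  -- α(S₂ | W ∪ Rs) = Θ λ(S₂)
  have hαS : alphaQ p μ S W = Θ * lamQ lam S := by
    rw [alpha_eq_of_fQ hlam hSne W, hEq]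
  have hdec : alphaQ p μ (Rs ∪ S₂) W = alphaQ p μ Rs W + alphaQ p μ S₂ (W ∪ Rs) :=
    alphaQ_union (Finset.disjoint_sdiff) hdisjWRs
  have hRsS₂ : Rs ∪ S₂ = S := Finset.union_sdiff_of_subset hRsSub
  have hlamS : lamQ lam S = lamQ lam Rs + lamQ lam S₂ := by
    rw [← hRsS₂, lamQ_union Finset.disjoint_sdiff]
  have hαS₂ : alphaQ p μ S₂ (W ∪ Rs) = Θ * lamQ lam S₂ := by
    rw [hRsS₂] at hdec
    rw [htight] at hRstight
    have : Θ * lamQ lam S = Θ * lamQ lam Rs + Θ * lamQ lam S₂ := by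
      rw [hlamS]; ring
    linarith
  refine ⟨L₂, S₂, hiS₂, ?_, ?_, ?_, ?_⟩
  · rw [hW₂]
    intro a ha
    have haS : a ∈ S := Finset.sdiff_subset ha
    simp only [Finset.mem_compl, Finset.mem_union, not_or]
    constructor
    · have := hSsub haS
      simpa [Finset.mem_compl] using this
    · exact (Finset.mem_sdiff.1 ha).2
  · -- GoodChain ∅ L₂ Θ
    refine GoodChain.append hGC ?_
    rw [Finset.empty_union, ← hW]
    refine ⟨?_, ?_, ?_, trivial⟩
    · exact fun a ha => hSsub (hRsSub ha)
    · intro R hR hRne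
      have hRsne : Rs.Nonempty := hRne.mono hR
      rw [fQ_eq_of_alpha hlam hRsne (W := W) hRstight]
      exact hS2 R (hR.trans hRsS) hRne
    · rcases Finset.eq_empty_or_nonempty Rs with he | hne
      · rw [he, fQ_empty]
        exact hΘ0
      · rw [fQ_eq_of_alpha hlam hne (W := W) hRstight]
  · rw [hW₂]
    exact fQ_eq_of_alpha hlam hS₂ne hαS₂
  · intro R hR hRne
    rw [hW₂, lt_fQ_iff hlam hRne]
    have hRsub : R ⊆ S \ {i} := by
      intro a ha
      have h1 := hR ha
      simp only [hS₂, Finset.mem_sdiff, Finset.mem_singleton] at h1 ⊢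
      exact ⟨h1.1.1, h1.2⟩
    have hdisjRsR : Disjoint Rs R := by
      rw [Finset.disjoint_right]
      intro a ha
      have := hR ha
      simp only [hS₂, Finset.mem_sdiff, Finset.mem_singleton] at this
      exact this.1.2
    have hdecR : alphaQ p μ (Rs ∪ R) W = alphaQ p μ Rs W + alphaQ p μ R (W ∪ Rs) :=
      alphaQ_union hdisjRsR hdisjWRs
    have hunion_sub : Rs ∪ R ⊆ S \ {i} := Finset.union_subset hRsS hRsub
    have hge : Θ * lamQ lam (Rs ∪ R) ≤ alphaQ p μ (Rs ∪ R) W := hS2' _ hunion_sub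
    have hlamRR : lamQ lam (Rs ∪ R) = lamQ lam Rs + lamQ lam R :=
      lamQ_union hdisjRsR
    rw [htight] at hRstight
    by_contra hle
    push_neg at hle
    -- then Rs ∪ R is tight, contradiction
    have htightRR : tight (Rs ∪ R) := by
      rw [htight]
      have h1 : alphaQ p μ R (W ∪ Rs) ≤ Θ * lamQ lam R := hle
      have h2 : Θ * lamQ lam (Rs ∪ R) = Θ * lamQ lam Rs + Θ * lamQ lam R := by
        rw [hlamRR]; ring
      linarith
    have := htight_sub _ hunion_sub htightRR
    obtain ⟨a, ha⟩ := hRne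
    have haRs : a ∈ Rs := this (Finset.mem_union_right _ ha)
    exact (Finset.disjoint_right.1 hdisjRsR) ha haRs

end Refine

section Minorant
variable {n m : ℕ} {p : Fin n → Fin m → ℝ} {μ : Fin m → ℝ} {lam : Fin n → ℝ} {i : Fin n}

lemma rateQ_nonneg' (hq : validP p) (hμ : ∀ j, 0 ≤ μ j) (hlam : ∀ r, 0 < lam r) :
    0 ≤ rateAux lam p (n + 1) Finset.univ μ i := by
  have hμc : ∀ j, μ j = μ j * ∏ r ∈ (∅ : Finset (Fin n)), (1 - p r j) := by simp
  have hcard : ((∅ : Finset (Fin n))ᶜ).card < n + 1 := by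
    rw [Finset.compl_empty]; simp [Finset.card_univ]
  have h := rateAux_out (i := i) hq hμ hlam (n + 1) ∅ μ 0 [] hμc hcard
    (by rw [Finset.compl_empty]; exact Finset.mem_univ i) trivial rfl
    (fun R _ hRne => fQ_nonneg hq hμ hlam R ∅)
  rw [Finset.compl_empty] at h
  rcases h with h | ⟨L', S, _, _, _, hlt, _, hval⟩
  · rw [h]
  · rw [hval]; linarith

lemma fQ_update_continuous {S W : Finset (Fin n)} (hiS : i ∈ S) (hiW : i ∉ W) :
    Continuous fun y : Fin m → ℝ => fQ (Function.update p i y) μ lam S W := by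
  have hrw : ∀ y : Fin m → ℝ, fQ (Function.update p i y) μ lam S W
      = (∑ j, μ j * (∏ r ∈ W, (1 - p r j)) *
          (1 - (1 - y j) * ∏ r ∈ S.erase i, (1 - p r j))) / lamQ lam S := by
    intro y
    rw [fQ, alphaQ]
    congr 1
    exact Finset.sum_congr rfl fun j _ => by
      rw [prod_update_not_mem hiW, prod_update_mem hiS]
  simp only [hrw]
  refine Continuous.div_const ?_ _
  refine continuous_finset_sum _ fun j _ => ?_
  exact continuous_const.mul
    (continuous_const.sub ((continuous_const.sub (continuous_apply j)).mul continuous_const))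

/-- pointwise supporting continuous minorant of the best-response objective -/
lemma exists_minorant (hp : ∀ r, inSimplex (p r)) (hμ : ∀ j, 0 ≤ μ j)
    (hlam : ∀ r, 0 < lam r) {xb : Fin m → ℝ} (hxb : inSimplex xb) :
    ∃ G : (Fin m → ℝ) → ℝ, Continuous G ∧
      (∀ y, inSimplex y → G y ≤ rateQ lam μ (Function.update p i y) i) ∧
      G xb = rateQ lam μ (Function.update p i xb) i := by
  classical
  set F : (Fin m → ℝ) → ℝ := fun y => rateQ lam μ (Function.update p i y) i with hF
  have hFnn : ∀ y, inSimplex y → 0 ≤ F y := fun y hy =>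
    rateQ_nonneg' (validP_update hp hy) hμ hlam
  have hqx : validP (Function.update p i xb) := validP_update hp hxb
  -- unfold the algorithm at xb
  have hμc : ∀ j, μ j = μ j * ∏ r ∈ (∅ : Finset (Fin n)),
      (1 - Function.update p i xb r j) := by simp
  have hcard : ((∅ : Finset (Fin n))ᶜ).card < n + 1 := by
    rw [Finset.compl_empty]; simp [Finset.card_univ]
  have hout := rateAux_out (i := i) hqx hμ hlam (n + 1) ∅ μ 0 [] hμc hcard
    (by rw [Finset.compl_empty]; exact Finset.mem_univ i) trivial rfl
    (fun R _ hRne => fQ_nonneg hqx hμ hlam R ∅)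
  rw [Finset.compl_empty] at hout
  rcases hout with h0 | ⟨L, S, hiS, hSsub, hGC, hlt1, hS2, hval⟩
  · exact ⟨fun _ => 0, continuous_const, fun y hy => hFnn y hy, by
      simpa [rateQ] using h0.symm⟩
  -- refine the certificate
  set p' := Function.update p i xb with hp'
  set Tb := fQ p' μ lam S (chainUnion L) with hTb
  obtain ⟨L₂, S₂, hiS₂, hS₂sub, hGC₂, hEq₂, hstrict⟩ :=
    refine_cert (i := i) hqx hμ hlam hiS hSsub (hGC.mono (le_refl _)) rfl hS2
  set W₂ := chainUnion L₂ with hW₂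
  have hiW₂ : i ∉ W₂ := Finset.mem_compl.1 (hS₂sub hiS₂)
  -- x-independent strict lower bound on the i-free subsets of S₂
  set RS : Finset ℝ := ((S₂ \ {i}).powerset.filter Finset.Nonempty).image
    (fun R => fQ p' μ lam R W₂) with hRS
  set M : ℝ := (insert (1 : ℝ) RS).min' ⟨1, Finset.mem_insert_self 1 RS⟩ with hM
  have hM1 : M ≤ 1 := Finset.min'_le _ _ (Finset.mem_insert_self 1 RS)
  have hMle : ∀ R ⊆ S₂ \ {i}, R.Nonempty → M ≤ fQ p' μ lam R W₂ := by
    intro R hR hRne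
    refine Finset.min'_le _ _ ?_
    exact Finset.mem_insert_of_mem (Finset.mem_image_of_mem _
      (Finset.mem_filter.2 ⟨Finset.mem_powerset.2 hR, hRne⟩))
  have hΘM : Tb < M := by
    refine (Finset.lt_min'_iff _ _).2 ?_
    intro b hb
    rcases Finset.mem_insert.1 hb with rfl | hb
    · exact hlt1
    · obtain ⟨R, hRmem, rfl⟩ := Finset.mem_image.1 hb
      obtain ⟨hRsub, hRne⟩ := Finset.mem_filter.1 hRmem
      exact hstrict R (Finset.mem_powerset.1 hRsub) hRne
  set K : ℝ := (1 - Tb) / (M - Tb) with hK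
  have hKpos : 0 < K := div_pos (by linarith) (by linarith)
  set φ : (Fin m → ℝ) → ℝ := fun y => fQ (Function.update p i y) μ lam S₂ W₂ with hφ
  have hφxb : φ xb = Tb := hEq₂
  set G : (Fin m → ℝ) → ℝ := fun y =>
    max 0 (min (1 - max (φ y) Tb) (K * (M - max (φ y) Tb))) with hG
  have hφcont : Continuous φ := fQ_update_continuous hiS₂ hiW₂
  refine ⟨G, ?_, ?_, ?_⟩
  · refine continuous_const.max ?_
    refine Continuous.min ?_ ?_
    · exact continuous_const.sub (hφcont.max continuous_const)
    · exact continuous_const.mul (continuous_const.sub (hφcont.max continuous_const))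
  · -- G ≤ F on the simplex
    intro y hy
    rcases le_or_gt (G y) 0 with h | h
    · exact h.trans (hFnn y hy)
    set Θy := max (φ y) Tb with hΘy
    have ht : 0 < min (1 - Θy) (K * (M - Θy)) := by
      have h' : (0:ℝ) < max 0 (min (1 - Θy) (K * (M - Θy))) := h
      exact (lt_max_iff.1 h').resolve_left (lt_irrefl 0)
    have hGy : G y = min (1 - Θy) (K * (M - Θy)) := max_eq_right ht.le
    have h1 : 0 < 1 - Θy := lt_of_lt_of_le ht (min_le_left _ _)
    have h2 : 0 < K * (M - Θy) := lt_of_lt_of_le ht (min_le_right _ _)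
    have hΘyM : Θy < M := by
      by_contra hc
      push_neg at hc
      nlinarith
    have hΘy1 : Θy < 1 := by linarith
    -- apply the key lemma at y
    have hqy : validP (Function.update p i y) := validP_update hp hy
    have hiL₂ : i ∉ chainUnion L₂ := hiW₂
    have hGCy : GoodChain (Function.update p i y) μ lam ∅ L₂ Θy := by
      refine GoodChain_update_indep (x := xb) (by simp) hiL₂ ?_
      exact (hGC₂).mono (le_max_right _ _)
    have hS2y : ∀ R ⊆ S₂ \ {i}, R.Nonempty →
        Θy ≤ fQ (Function.update p i y) μ lam R W₂ := by
      intro R hR hRne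
      have hiR : i ∉ R := fun hiR => by simpa using (hR hiR)
      rw [fQ_update_indep (y := xb) hiR hiW₂]
      calc Θy ≤ M := hΘyM.le
      _ ≤ fQ p' μ lam R W₂ := hMle R hR hRne
    have hkey := key_lower (i := i) hqy hμ hlam hΘy1 hiS₂ hS₂sub hGCy
      (le_max_left _ _) hS2y
    have hle : G y ≤ 1 - Θy := hGy ▸ min_le_left _ _
    exact hle.trans (by simpa [rateQ] using hkey)
  · -- G xb = F xb
    rw [hG]
    simp only [hφxb, max_self]
    have hKM : K * (M - Tb) = 1 - Tb := by
      rw [hK]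
      exact div_mul_cancel₀ _ (by linarith)
    rw [hKM, min_self]
    rw [max_eq_right (by linarith)]
    simp only [rateQ]
    exact hval.symm

end Minorant

section Final
variable {n m : ℕ} {p : Fin n → Fin m → ℝ} {μ : Fin m → ℝ} {lam : Fin n → ℝ} {i : Fin n}

lemma inSimplex_eq_stdSimplex :
    {x : Fin m → ℝ | inSimplex x} = stdSimplex ℝ (Fin m) := rfl

/-- quasiconvexity step: the value at a convex combination is bounded by the value at one
of the endpoints. -/
lemma rate_quasiconvex (hp : ∀ r, inSimplex (p r)) (hμ : ∀ j, 0 ≤ μ j)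
    (hlam : ∀ r, 0 < lam r) {x0 x1 : Fin m → ℝ} (h0 : inSimplex x0) (h1 : inSimplex x1)
    {a b : ℝ} (ha : 0 ≤ a) (hb : 0 ≤ b) (hab : a + b = 1)
    (hz : inSimplex (a • x0 + b • x1)) :
    rateQ lam μ (Function.update p i (a • x0 + b • x1)) i
      ≤ max (rateQ lam μ (Function.update p i x0) i)
          (rateQ lam μ (Function.update p i x1) i) := by
  classical
  set z := a • x0 + b • x1 with hzdef
  have hqz : validP (Function.update p i z) := validP_update hp hz
  have hμc : ∀ j, μ j = μ j * ∏ r ∈ (∅ : Finset (Fin n)),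
      (1 - Function.update p i z r j) := by simp
  have hcard : ((∅ : Finset (Fin n))ᶜ).card < n + 1 := by
    rw [Finset.compl_empty]; simp [Finset.card_univ]
  have hout := rateAux_out (i := i) hqz hμ hlam (n + 1) ∅ μ 0 [] hμc hcard
    (by rw [Finset.compl_empty]; exact Finset.mem_univ i) trivial rfl
    (fun R _ hRne => fQ_nonneg hqz hμ hlam R ∅)
  rw [Finset.compl_empty] at hout
  rcases hout with hv0 | ⟨L, S, hiS, hSsub, hGC, hlt1, hS2, hval⟩
  · have hz0 : rateQ lam μ (Function.update p i z) i = 0 := by simpa [rateQ] using hv0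
    rw [hz0]
    exact le_trans (rateQ_nonneg' (validP_update hp h0) hμ hlam) (le_max_left _ _)
  · set W := chainUnion L with hW
    set Θz := fQ (Function.update p i z) μ lam S W with hΘz
    have hiW : i ∉ W := Finset.mem_compl.1 (hSsub hiS)
    have hFz : rateQ lam μ (Function.update p i z) i = 1 - Θz := by
      simpa [rateQ] using hval
    have hzfun : z = fun j => a * x0 j + b * x1 j := by
      funext j
      simp [hzdef, Pi.add_apply, Pi.smul_apply, smul_eq_mul]
    have haff : Θz = a * fQ (Function.update p i x0) μ lam S W
        + b * fQ (Function.update p i x1) μ lam S W := by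
      rw [hΘz, hzfun, fQ_update_affine hab hiS hiW]
    -- pick the endpoint with the smaller value of f(S|W)
    obtain ⟨w, hwsimp, hφw, hwmax⟩ :
        ∃ w, inSimplex w ∧ fQ (Function.update p i w) μ lam S W ≤ Θz ∧
          rateQ lam μ (Function.update p i w) i
            ≤ max (rateQ lam μ (Function.update p i x0) i)
                (rateQ lam μ (Function.update p i x1) i) := by
      rcases le_total (fQ (Function.update p i x0) μ lam S W)
        (fQ (Function.update p i x1) μ lam S W) with hle | hle
      · refine ⟨x0, h0, ?_, le_max_left _ _⟩
        rw [haff]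
        nlinarith
      · refine ⟨x1, h1, ?_, le_max_right _ _⟩
        rw [haff]
        nlinarith
    -- apply the key lemma at the endpoint w
    have hqw : validP (Function.update p i w) := validP_update hp hwsimp
    have hGCw : GoodChain (Function.update p i w) μ lam ∅ L Θz :=
      GoodChain_update_indep (x := z) (by simp) hiW hGC
    have hS2w : ∀ R ⊆ S \ {i}, R.Nonempty →
        Θz ≤ fQ (Function.update p i w) μ lam R W := by
      intro R hR hRne
      have hiR : i ∉ R := fun hiR => by simpa using (hR hiR)
      rw [fQ_update_indep (y := z) hiR hiW]
      exact hS2 R hR hRne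
    have hkey := key_lower (i := i) hqw hμ hlam hlt1 hiS hSsub hGCw hφw hS2w
    calc rateQ lam μ (Function.update p i z) i = 1 - Θz := hFz
    _ ≤ rateQ lam μ (Function.update p i w) i := by simpa [rateQ] using hkey
    _ ≤ _ := hwmax

end Final

section Theorem
open Filter Topology

theorem statement12' {n m : ℕ} (hn : 1 ≤ n) (hm : 1 ≤ m)
    (lam : Fin n → ℝ) (μ : Fin m → ℝ) (p : Fin n → Fin m → ℝ)
    (hlam : ∀ i, 0 < lam i ∧ lam i < 1) (hmu : ∀ j, 0 ≤ μ j ∧ μ j ≤ 1)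
    (hp : ∀ i, inSimplex (p i)) (i : Fin n) :
    Set.Nonempty {x : Fin m → ℝ | inSimplex x ∧ ∀ y : Fin m → ℝ, inSimplex y →
        rateQ lam μ (Function.update p i x) i ≤ rateQ lam μ (Function.update p i y) i} ∧
    IsClosed {x : Fin m → ℝ | inSimplex x ∧ ∀ y : Fin m → ℝ, inSimplex y →
        rateQ lam μ (Function.update p i x) i ≤ rateQ lam μ (Function.update p i y) i} ∧
    Convex ℝ {x : Fin m → ℝ | inSimplex x ∧ ∀ y : Fin m → ℝ, inSimplex y →
        rateQ lam μ (Function.update p i x) i ≤ rateQ lam μ (Function.update p i y) i} := by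
  classical
  have hlam' : ∀ r, 0 < lam r := fun r => (hlam r).1
  have hμ0 : ∀ j, 0 ≤ μ j := fun j => (hmu j).1
  set F : (Fin m → ℝ) → ℝ := fun x => rateQ lam μ (Function.update p i x) i with hF
  set A : Set (Fin m → ℝ) :=
    {x : Fin m → ℝ | inSimplex x ∧ ∀ y : Fin m → ℝ, inSimplex y → F x ≤ F y} with hA
  have hFnn : ∀ x, inSimplex x → 0 ≤ F x := fun x hx =>
    rateQ_nonneg' (validP_update hp hx) hμ0 hlam'
  -- the simplex is nonempty
  have hm0 : (m : ℝ) ≠ 0 := by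
    have : 0 < m := hm
    positivity
  have hΔne : inSimplex (fun _ : Fin m => (m : ℝ)⁻¹) := by
    constructor
    · intro j
      positivity
    · rw [Finset.sum_const, Finset.card_univ, Fintype.card_fin, nsmul_eq_mul]
      field_simp
  -- part 1: existence of a minimizer
  set Simg : Set ℝ := F '' {x | inSimplex x} with hSimg
  have himgne : Simg.Nonempty := ⟨F _, ⟨_, hΔne, rfl⟩⟩
  have hbdd : BddBelow Simg := ⟨0, by
    rintro v ⟨x, hx, rfl⟩
    exact hFnn x hx⟩
  set v := sInf Simg with hv
  have hseq : ∀ k : ℕ, ∃ x, inSimplex x ∧ F x < v + 1 / ((k : ℝ) + 1) := by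
    intro k
    have hpos : (0:ℝ) < 1 / ((k:ℝ) + 1) := by positivity
    obtain ⟨fx, ⟨x, hx, rfl⟩, hlt⟩ := exists_lt_of_csInf_lt himgne (by linarith : v < v + 1 / ((k:ℝ)+1))
    exact ⟨x, hx, hlt⟩
  choose xs hxs hxlt using hseq
  obtain ⟨xa, hxaΔ, φ, hφmono, hφtend⟩ :=
    (isCompact_stdSimplex ℝ (Fin m)).tendsto_subseq (x := xs) (fun k => hxs k)
  have hxaΔ' : inSimplex xa := hxaΔ
  obtain ⟨G, hGcont, hGle, hGeq⟩ := exists_minorant (i := i) hp hμ0 hlam' hxaΔ'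
  have hFa_le : F xa ≤ v := by
    have htend1 : Tendsto (fun k => G (xs (φ k))) atTop (𝓝 (G xa)) :=
      (hGcont.tendsto xa).comp hφtend
    have hbound : ∀ k, G (xs (φ k)) ≤ v + 1 / ((k:ℝ) + 1) := by
      intro k
      have h1 : G (xs (φ k)) ≤ F (xs (φ k)) := hGle _ (hxs _)
      have h2 : F (xs (φ k)) < v + 1 / ((φ k : ℝ) + 1) := hxlt _
      have h3 : 1 / ((φ k : ℝ) + 1) ≤ 1 / ((k : ℝ) + 1) := by
        apply one_div_le_one_div_of_le
        · positivity
        · have hk : k ≤ φ k := hφmono.le_apply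
          have hkr : (k:ℝ) ≤ (φ k : ℝ) := Nat.cast_le.2 hk
          linarith
      linarith
    have htend2 : Tendsto (fun k : ℕ => v + 1 / ((k:ℝ) + 1)) atTop (𝓝 v) := by
      have h1 := tendsto_one_div_add_atTop_nhds_zero_nat (𝕜 := ℝ)
      have h2 := Tendsto.add (tendsto_const_nhds (x := v) (f := atTop (α := ℕ))) h1
      simpa using h2
    have := le_of_tendsto_of_tendsto' htend1 htend2 hbound
    rwa [hGeq] at this
  have hamem : xa ∈ A :=
    ⟨hxaΔ', fun y hy => hFa_le.trans (csInf_le hbdd ⟨y, hy, rfl⟩)⟩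
  refine ⟨⟨xa, hamem⟩, ?_, ?_⟩
  · -- closedness
    refine isClosed_of_closure_subset ?_
    intro xb hxb
    have hAsub : A ⊆ stdSimplex ℝ (Fin m) := fun x hx => hx.1
    have hxbΔ : inSimplex xb := by
      have h1 := closure_mono hAsub hxb
      rwa [IsClosed.closure_eq (isClosed_stdSimplex ℝ (Fin m))] at h1
    refine ⟨hxbΔ, ?_⟩
    intro y hy
    by_contra hcon
    push_neg at hcon
    obtain ⟨G', hG'cont, hG'le, hG'eq⟩ := exists_minorant (i := i) hp hμ0 hlam' hxbΔ
    have hopen : IsOpen {z : Fin m → ℝ | F y < G' z} :=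
      isOpen_lt continuous_const hG'cont
    have hxbO : xb ∈ {z : Fin m → ℝ | F y < G' z} := by
      simp only [Set.mem_setOf_eq, hG'eq]
      exact hcon
    obtain ⟨aa, haaO, haaA⟩ := mem_closure_iff.1 hxb _ hopen hxbO
    have h1 : F aa ≤ F y := haaA.2 y hy
    have h2 : G' aa ≤ F aa := hG'le _ haaA.1
    have h3 : F y < G' aa := haaO
    linarith
  · -- convexity
    intro x0 hx0 x1 hx1 a b ha hb hab
    have hzΔ : inSimplex (a • x0 + b • x1) :=
      (convex_stdSimplex ℝ (Fin m)) hx0.1 hx1.1 ha hb hab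
    refine ⟨hzΔ, ?_⟩
    intro y hy
    have hq := rate_quasiconvex (i := i) hp hμ0 hlam' hx0.1 hx1.1 ha hb hab hzΔ
    exact hq.trans (max_le (hx0.2 y hy) (hx1.2 y hy))

end Theorem

/-- State (remaining queues, discounted service rates) of the rate algorithm after `k` steps. -/
noncomputable def stateQ {n m : ℕ} (lam : Fin n → ℝ) (μ : Fin m → ℝ)
    (p : Fin n → Fin m → ℝ) : ℕ → Finset (Fin n) × (Fin m → ℝ)
  | 0 => (Finset.univ, μ)
  | k + 1 =>
    ((stateQ lam μ p k).1 \ topSet p (stateQ lam μ p k).2 lam (stateQ lam μ p k).1,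
      fun j => (stateQ lam μ p k).2 j *
        ∏ r ∈ topSet p (stateQ lam μ p k).2 lam (stateQ lam μ p k).1, (1 - p r j))

/-- `g_{k+1} = max {0, 1 - f_{k+1}}`: the aging rate of the `(k+1)`st group output by
the rate algorithm (`k = 0` corresponds to `S_1`). -/
noncomputable def gQ {n m : ℕ} (lam : Fin n → ℝ) (μ : Fin m → ℝ)
    (p : Fin n → Fin m → ℝ) (k : ℕ) : ℝ :=
  max 0 (1 - fQ p (stateQ lam μ p k).2 lam
    (topSet p (stateQ lam μ p k).2 lam (stateQ lam μ p k).1) ∅)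

/-- `f* = min_{∅ ≠ S ⊆ [n]} f(S | p)`. -/
noncomputable def fstarQ {n m : ℕ} (p : Fin n → Fin m → ℝ) (μ : Fin m → ℝ)
    (lam : Fin n → ℝ) : ℝ :=
  sInf ((fun S => fQ p μ lam S ∅) '' {S : Finset (Fin n) | S.Nonempty})

/-- A nonempty subset is tight if it minimizes `f(· | p)` over all nonempty subsets of `[n]`. -/
def IsTight {n m : ℕ} (p : Fin n → Fin m → ℝ) (μ : Fin m → ℝ) (lam : Fin n → ℝ)
    (S : Finset (Fin n)) : Prop :=
  S.Nonempty ∧ ∀ T : Finset (Fin n), T.Nonempty → fQ p μ lam S ∅ ≤ fQ p μ lam T ∅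

/-- `T` is a level subset at the next level, given that `W` is the union of all level
subsets at the previous levels: `T` is an inclusion-minimal nonempty subset of `K \ W`
with `f(T | W) = f*`, where `K` is the union of all tight subsets. -/
def IsLevelSet {n m : ℕ} (p : Fin n → Fin m → ℝ) (μ : Fin m → ℝ) (lam : Fin n → ℝ)
    (W T : Finset (Fin n)) : Prop :=
  T.Nonempty ∧ T ⊆ unionMin p μ lam Finset.univ ∅ \ W ∧
    fQ p μ lam T W = fstarQ p μ lam ∧
    ∀ T' : Finset (Fin n), T'.Nonempty → T' ⊆ T →
      fQ p μ lam T' W = fstarQ p μ lam → T' = T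

open scoped Classical in
/-- `levelUnion p μ lam ℓ` is the union of all level subsets at levels `≤ ℓ`
in the level partition of the union `K` of all tight subsets. -/
noncomputable def levelUnion {n m : ℕ} (p : Fin n → Fin m → ℝ) (μ : Fin m → ℝ)
    (lam : Fin n → ℝ) : ℕ → Finset (Fin n)
  | 0 => ∅
  | ℓ + 1 =>
    levelUnion p μ lam ℓ ∪
      Finset.univ.powerset.sup fun T =>
        if IsLevelSet p μ lam (levelUnion p μ lam ℓ) T then T else ∅

/-- **Best responses form a nonempty closed convex set (Corollary 3.6).** For a fixed queue
`i` and fixed strategies of the other queues, the set of global minimizers of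
`x ↦ r_i(x, p_{-i})` over the simplex is nonempty, closed and convex. -/
theorem statement12 {n m : ℕ} (hn : 1 ≤ n) (hm : 1 ≤ m)
    (lam : Fin n → ℝ) (μ : Fin m → ℝ) (p : Fin n → Fin m → ℝ)
    (hlam : ∀ i, 0 < lam i ∧ lam i < 1) (hmu : ∀ j, 0 ≤ μ j ∧ μ j ≤ 1)
    (hp : ∀ i, inSimplex (p i)) (i : Fin n) :
    Set.Nonempty {x : Fin m → ℝ | inSimplex x ∧ ∀ y : Fin m → ℝ, inSimplex y →
        rateQ lam μ (Function.update p i x) i ≤ rateQ lam μ (Function.update p i y) i} ∧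
    IsClosed {x : Fin m → ℝ | inSimplex x ∧ ∀ y : Fin m → ℝ, inSimplex y →
        rateQ lam μ (Function.update p i x) i ≤ rateQ lam μ (Function.update p i y) i} ∧
    Convex ℝ {x : Fin m → ℝ | inSimplex x ∧ ∀ y : Fin m → ℝ, inSimplex y →
        rateQ lam μ (Function.update p i x) i ≤ rateQ lam μ (Function.update p i y) i} := by
  exact statement12' hn hm lam μ p hlam hmu hp i
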